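/- arXiv:1301.3967 — 2 statements merged into one kernel-verified Lean document; each statement's English description precedes it below -/
import Mathlib

section
/- Let f : A → B be a homomorphism of Noetherian commutative rings and let I be a radical ideal of A with primary decomposition I = 𝔭₁ ∩ ⋯ ∩ 𝔭ᵣ by its associated prime ideals. If the extension IB is a radical ideal of B, then IB = 𝔭₁B ∩ ⋯ ∩ 𝔭ᵣB. -/
lemma ideal_map_finset_prod {A B : Type*} [CommRing A] [CommRing B] (f : A →+* B)
    {ι : Type*} (s : Finset ι) (g : ι → Ideal A) :
    Ideal.map f (∏ i ∈ s, g i) = ∏ i ∈ s, Ideal.map f (g i) := by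
  classical
  induction s using Finset.induction with
  | empty => simp [Ideal.map_top]
  | insert _ _ h ih => simp [Finset.prod_insert h, Ideal.map_mul, ih]

/-- Let `f : A → B` be a homomorphism of Noetherian rings and `I` a radical ideal of `A` with
(irredundant) primary decomposition `I = 𝔭₁ ∩ ⋯ ∩ 𝔭ᵣ` by its associated (= minimal) primes.
If `IB` is a radical ideal of `B`, then `IB = 𝔭₁B ∩ ⋯ ∩ 𝔭ᵣB`. -/
theorem radical_extension_inf {A B : Type*} [CommRing A] [CommRing B]
    [IsNoetherianRing A] [IsNoetherianRing B]
    (f : A →+* B) (I : Ideal A) (hI : I.IsRadical)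
    (r : ℕ) (𝔭 : Fin r → Ideal A) (hprime : ∀ i, (𝔭 i).IsPrime)
    (hdec : I = ⨅ i, 𝔭 i)
    (hirr : ∀ i, ¬ (⨅ j ∈ ({i}ᶜ : Set (Fin r)), 𝔭 j) ≤ 𝔭 i)
    (hrad : (I.map f).IsRadical) :
    I.map f = ⨅ i, (𝔭 i).map f := by
  apply le_antisymm
  · exact le_iInf fun i => Ideal.map_mono (hdec ▸ iInf_le _ i)
  · intro x hx
    have hxm : ∀ i, x ∈ (𝔭 i).map f := fun i => Ideal.mem_iInf.mp hx i
    have h1 : x ^ r ∈ ∏ i : Fin r, (𝔭 i).map f := by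
      have := Ideal.prod_mem_prod (s := (Finset.univ : Finset (Fin r)))
        (I := fun i => (𝔭 i).map f) (x := fun _ => x) (fun i _ => hxm i)
      simpa using this
    have h2 : (∏ i : Fin r, (𝔭 i).map f) ≤ Ideal.map f I := by
      rw [← ideal_map_finset_prod]
      apply Ideal.map_mono
      rw [hdec]
      refine le_trans Ideal.prod_le_inf ?_
      rw [Finset.inf_eq_iInf]
      exact le_iInf fun i => iInf_le_of_le i (by simp)
    exact hrad ⟨r, h2 h1⟩
end

section
/- The ring R = k[x, z, t]/(xz, xt) is an algebra retract of the Gorenstein ring S = k[x, y, z, t, w]/(xz, xt, yt, yw, zw) (the Stanley-Reisner ring of the pentagon), via the inclusion of variables with retraction sending y and w to 0. -/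
open MvPolynomial

noncomputable section PentagonAux

variable (k : Type*) [Field k]

abbrev I3 : Ideal (MvPolynomial (Fin 3) k) := Ideal.span {X 0 * X 1, X 0 * X 2}
abbrev I5 : Ideal (MvPolynomial (Fin 5) k) :=
  Ideal.span {X 0 * X 2, X 0 * X 3, X 1 * X 3, X 1 * X 4, X 2 * X 4}

lemma map3 : (I3 k).map (rename (R := k) ![0, 2, 3]).toRingHom ≤ I5 k := by
  rw [Ideal.map_span]
  apply Ideal.span_le.2
  rintro _ ⟨p, hp, rfl⟩
  simp only [Set.mem_insert_iff, Set.mem_singleton_iff] at hp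
  rcases hp with rfl | rfl <;>
    · apply Ideal.subset_span
      simp [rename_X]

lemma map5 : (I5 k).map (aeval (R := k) ![X 0, 0, X 1, X 2, 0]).toRingHom ≤ I3 k := by
  rw [Ideal.map_span]
  apply Ideal.span_le.2
  rintro _ ⟨p, hp, rfl⟩
  simp only [Set.mem_insert_iff, Set.mem_singleton_iff] at hp
  rcases hp with rfl | rfl | rfl | rfl | rfl <;>
    · simp only [AlgHom.toRingHom_eq_coe, RingHom.coe_coe, map_mul, aeval_X,
        Matrix.cons_val_zero, Matrix.cons_val_one, Matrix.head_cons, Matrix.cons_val_two,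
        Matrix.tail_cons, Matrix.cons_val_three, Matrix.cons_val_four, mul_zero, zero_mul]
      first
        | exact Ideal.zero_mem _
        | exact Ideal.subset_span (by simp)

def θaux : MvPolynomial (Fin 3) k ⧸ I3 k →+* MvPolynomial (Fin 5) k ⧸ I5 k :=
  Ideal.Quotient.lift _ ((Ideal.Quotient.mk (I5 k)).comp (rename ![0, 2, 3]).toRingHom)
    fun _a ha => Ideal.Quotient.eq_zero_iff_mem.2 (map3 k (Ideal.mem_map_of_mem _ ha))

def φaux : MvPolynomial (Fin 5) k ⧸ I5 k →+* MvPolynomial (Fin 3) k ⧸ I3 k :=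
  Ideal.Quotient.lift _ ((Ideal.Quotient.mk (I3 k)).comp (aeval ![X 0, 0, X 1, X 2, 0]).toRingHom)
    fun _a ha => Ideal.Quotient.eq_zero_iff_mem.2 (map5 k (Ideal.mem_map_of_mem _ ha))

end PentagonAux

/-- The ring `R = k[x,z,t]/(xz, xt)` is an algebra retract of the Stanley-Reisner ring of the
pentagon `S = k[x,y,z,t,w]/(xz, xt, yt, yw, zw)`, via the inclusion of the variables `x,z,t`,
with retraction sending `y` and `w` to `0`.  (Variables of `S` are indexed `0=x, 1=y, 2=z,
3=t, 4=w`; variables of `R` are indexed `0=x, 1=z, 2=t`, included via `![0,2,3]`.) -/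
theorem pentagon_retract (k : Type*) [Field k] :
    ∃ (θ : MvPolynomial (Fin 3) k ⧸
            (Ideal.span {X 0 * X 1, X 0 * X 2} : Ideal (MvPolynomial (Fin 3) k)) →+*
          MvPolynomial (Fin 5) k ⧸
            (Ideal.span {X 0 * X 2, X 0 * X 3, X 1 * X 3, X 1 * X 4, X 2 * X 4} :
              Ideal (MvPolynomial (Fin 5) k)))
      (φ : MvPolynomial (Fin 5) k ⧸
            (Ideal.span {X 0 * X 2, X 0 * X 3, X 1 * X 3, X 1 * X 4, X 2 * X 4} :
              Ideal (MvPolynomial (Fin 5) k)) →+*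
          MvPolynomial (Fin 3) k ⧸
            (Ideal.span {X 0 * X 1, X 0 * X 2} : Ideal (MvPolynomial (Fin 3) k))),
      (∀ c : k, θ (Ideal.Quotient.mk _ (C c)) = Ideal.Quotient.mk _ (C c)) ∧
      (∀ i : Fin 3, θ (Ideal.Quotient.mk _ (X i)) =
        Ideal.Quotient.mk _ (X (![0, 2, 3] i))) ∧
      Function.Injective θ ∧
      φ.comp θ = RingHom.id _ ∧
      (∀ c : k, φ (Ideal.Quotient.mk _ (C c)) = Ideal.Quotient.mk _ (C c)) ∧
      (∀ i : Fin 3, φ (Ideal.Quotient.mk _ (X (![0, 2, 3] i))) =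
        Ideal.Quotient.mk _ (X i)) ∧
      φ (Ideal.Quotient.mk _ (X 1)) = 0 ∧
      φ (Ideal.Quotient.mk _ (X 4)) = 0 := by
  have hid : (φaux k).comp (θaux k) = RingHom.id _ := by
    refine Ideal.Quotient.ringHom_ext (MvPolynomial.ringHom_ext (fun c => ?_) (fun i => ?_))
    · simp [θaux, φaux]
    · fin_cases i <;> simp [θaux, φaux]
  refine ⟨θaux k, φaux k, fun c => by simp [θaux], fun i => by fin_cases i <;> simp [θaux],
    fun a b h => ?_, hid, fun c => by simp [φaux], fun i => by fin_cases i <;> simp [φaux],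
    by simp [φaux], by simp [φaux]⟩
  have := congrArg (φaux k) h
  rwa [← RingHom.comp_apply, ← RingHom.comp_apply, hid, RingHom.id_apply, RingHom.id_apply] at this
end
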